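/- arXiv:0901.3232 — 5 statements merged into one kernel-verified Lean document; each statement's English description precedes it below -/
import Mathlib

section
/- Let λ be a Young diagram with conjugate λ', and for k ≥ 1 set m_k = min(k−1, λ_k) + min(k−1, λ'_k). If m_k is odd, then λ_k + λ'_k is odd. Equivalently, (−1)^{m_k} = (−1)^{(λ_k + λ'_k)·m_k}. -/
/-- A Young diagram given by row lengths `part 1 ≥ part 2 ≥ ...` (1-indexed),
weakly decreasing and eventually zero. -/
structure Partition' where
  part : ℕ → ℕ
  antitone : ∀ ⦃i j : ℕ⦄, i ≤ j → part j ≤ part i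
  finite : ∃ N : ℕ, ∀ i : ℕ, N ≤ i → part i = 0

/-- The conjugate partition: `conj j = #{i ≥ 1 : part i ≥ j}`. -/
noncomputable def Partition'.conj (μ : Partition') (j : ℕ) : ℕ :=
  Set.ncard {i : ℕ | 1 ≤ i ∧ j ≤ μ.part i}

/-- The box `(i,j)` belongs to the diagram. -/
def Partition'.mem (μ : Partition') (i j : ℕ) : Prop :=
  1 ≤ i ∧ 1 ≤ j ∧ j ≤ μ.part i

lemma conj_ge (μ : Partition') (k : ℕ) (hk : 1 ≤ k) (h : k ≤ μ.part k) : k ≤ μ.conj k := by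
  obtain ⟨N, hN⟩ := μ.finite
  have hfin : {i : ℕ | 1 ≤ i ∧ k ≤ μ.part i}.Finite := by
    apply (Set.finite_Iio N).subset
    rintro i ⟨h1, h2⟩
    by_contra hi
    simp only [Set.mem_Iio, not_lt] at hi
    have := hN i hi
    omega
  have hsub : Set.Icc 1 k ⊆ {i : ℕ | 1 ≤ i ∧ k ≤ μ.part i} := by
    rintro i ⟨h1, h2⟩
    exact ⟨h1, le_trans h (μ.antitone h2)⟩
  have := Set.ncard_le_ncard hsub hfin
  have hc : (Set.Icc 1 k).ncard = k := by
    rw [← Finset.coe_Icc, Set.ncard_coe_finset, Nat.card_Icc]; omega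
  exact le_trans (le_of_eq hc.symm) this

lemma conj_le (μ : Partition') (k : ℕ) (hk : 1 ≤ k) (h : μ.part k < k) :
    μ.conj k ≤ k - 1 := by
  have hsub : {i : ℕ | 1 ≤ i ∧ k ≤ μ.part i} ⊆ Set.Icc 1 (k - 1) := by
    rintro i ⟨h1, h2⟩
    refine ⟨h1, ?_⟩
    by_contra hi
    push_neg at hi
    have hki : k ≤ i := by omega
    have := μ.antitone hki
    omega
  have := Set.ncard_le_ncard hsub (Set.finite_Icc _ _)
  calc μ.conj k ≤ (Set.Icc 1 (k-1)).ncard := this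
    _ ≤ k - 1 := by rw [← Finset.coe_Icc, Set.ncard_coe_finset, Nat.card_Icc]; omega

/-- With `m_k = min(k−1, λ_k) + min(k−1, λ'_k)`: if `m_k` is odd then `λ_k + λ'_k` is odd;
equivalently `(−1)^{m_k} = (−1)^{(λ_k + λ'_k)·m_k}`. -/
theorem parity_mk (μ : Partition') (k : ℕ) (hk : 1 ≤ k) :
    (Odd (min (k - 1) (μ.part k) + min (k - 1) (μ.conj k)) → Odd (μ.part k + μ.conj k)) ∧
    ((-1 : ℤ) ^ (min (k - 1) (μ.part k) + min (k - 1) (μ.conj k))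
      = (-1 : ℤ) ^ ((μ.part k + μ.conj k) * (min (k - 1) (μ.part k) + min (k - 1) (μ.conj k)))) := by
  by_cases h : k ≤ μ.part k
  · have hb := conj_ge μ k hk h
    have h1 : min (k - 1) (μ.part k) = k - 1 := min_eq_left (by omega)
    have h2 : min (k - 1) (μ.conj k) = k - 1 := min_eq_left (by omega)
    rw [h1, h2]
    have hev : Even ((k - 1) + (k - 1)) := ⟨k - 1, rfl⟩
    constructor
    · intro hodd
      exact absurd hev (Nat.not_even_iff_odd.mpr hodd)
    · rw [hev.neg_one_pow, (hev.mul_left _).neg_one_pow]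
  · push_neg at h
    have hb := conj_le μ k hk h
    have h1 : min (k - 1) (μ.part k) = μ.part k := min_eq_right (by omega)
    have h2 : min (k - 1) (μ.conj k) = μ.conj k := min_eq_right hb
    rw [h1, h2]
    refine ⟨id, ?_⟩
    rcases Nat.even_or_odd (μ.part k + μ.conj k) with he | ho
    · rw [he.neg_one_pow, (he.mul_right _).neg_one_pow]
    · rw [ho.neg_one_pow, (ho.mul ho).neg_one_pow]
end

section
/- Let λ be a Young diagram with conjugate λ'. Then ∏_{(i,j)∈λ, i≠j} (−1) = (∏_{(i,j)∈λ, i<j} (−1)^{λ'_j + λ_j}) · (∏_{(i,j)∈λ, i>j} (−1)^{λ_i + λ'_i}). Equivalently, writing N for the number of off-diagonal boxes of λ, (−1)^N = (−1)^{Σ_{(i,j)∈λ, i<j}(λ'_j+λ_j) + Σ_{(i,j)∈λ, i>j}(λ_i+λ'_i)}. -/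
instance (μ : Partition') (i j : ℕ) : Decidable (μ.mem i j) :=
  inferInstanceAs (Decidable (_ ∧ _ ∧ _))

private lemma sum_ite_const {s : Finset ℕ} {P : ℕ → Prop} [DecidablePred P] (c : ℕ) :
    (∑ i ∈ s, if P i then c else 0) = (s.filter P).card * c := by
  rw [← Finset.sum_filter, Finset.sum_const, smul_eq_mul]

private lemma neg_one_pow_eq_of_even_add {a b : ℕ} (h : Even (a + b)) :
    (-1 : ℤ) ^ a = (-1) ^ b := by
  have h1 : ((-1 : ℤ)) ^ (a + b) = 1 := Even.neg_one_pow h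
  rw [pow_add] at h1
  have h2 : ((-1 : ℤ)) ^ b * (-1) ^ b = 1 := by
    rw [← pow_add]; exact Even.neg_one_pow ⟨b, rfl⟩
  have hb : ((-1 : ℤ)) ^ b ≠ 0 := pow_ne_zero _ (by norm_num)
  exact mul_right_cancel₀ hb (h1.trans h2.symm)

/-- Key characterization of the conjugate: for `k ≥ 1` and `i ≥ 1`,
`k ≤ μ.part i ↔ i ≤ μ.conj k`. -/
private lemma conj_spec (μ : Partition') {B k : ℕ} (hB : ∀ i, B ≤ i → μ.part i = 0)
    (hk : 1 ≤ k) : ∀ i, 1 ≤ i → (k ≤ μ.part i ↔ i ≤ μ.conj k) := by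
  classical
  have hlt : ∀ i, k ≤ μ.part i → i < B := by
    intro i h
    by_contra hge
    have := hB i (by omega)
    omega
  have hset : {i : ℕ | 1 ≤ i ∧ k ≤ μ.part i}
      = ↑((Finset.Ico 1 B).filter fun i => k ≤ μ.part i) := by
    ext i
    simp only [Set.mem_setOf_eq, Finset.coe_filter, Finset.mem_Ico]
    constructor
    · rintro ⟨h1, h2⟩; exact ⟨⟨h1, hlt i h2⟩, h2⟩
    · rintro ⟨⟨h1, _⟩, h2⟩; exact ⟨h1, h2⟩
  have hc : μ.conj k = ((Finset.Ico 1 B).filter fun i => k ≤ μ.part i).card := by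
    rw [Partition'.conj, hset, Set.ncard_coe_finset]
  intro i hi
  constructor
  · intro h
    have hsub : Finset.Icc 1 i ⊆ (Finset.Ico 1 B).filter fun i => k ≤ μ.part i := by
      intro x hx
      rw [Finset.mem_Icc] at hx
      rw [Finset.mem_filter, Finset.mem_Ico]
      have hpx : μ.part i ≤ μ.part x := μ.antitone hx.2
      exact ⟨⟨hx.1, by have := hlt i h; omega⟩, by omega⟩
    have := Finset.card_le_card hsub
    rw [Nat.card_Icc] at this
    omega
  · intro h
    by_contra hnot
    push_neg at hnot
    have hsub : ((Finset.Ico 1 B).filter fun i => k ≤ μ.part i) ⊆ Finset.Ico 1 i := by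
      intro x hx
      rw [Finset.mem_filter, Finset.mem_Ico] at hx
      rw [Finset.mem_Ico]
      refine ⟨hx.1.1, ?_⟩
      by_contra hxi
      have : μ.part x ≤ μ.part i := μ.antitone (by omega)
      omega
    have := Finset.card_le_card hsub
    rw [Nat.card_Ico] at this
    omega

/-- The sign identity: `(−1)^N = (−1)^{Σ_{(i,j)∈λ, i<j}(λ'_j+λ_j) + Σ_{(i,j)∈λ, i>j}(λ_i+λ'_i)}`,
where `N` is the number of off-diagonal boxes of `λ`. -/
theorem sign_identity (μ : Partition') :
    (-1 : ℤ) ^ (Set.ncard {p : ℕ × ℕ | μ.mem p.1 p.2 ∧ p.1 ≠ p.2})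
      = (-1 : ℤ) ^
        ((∑ᶠ p ∈ {p : ℕ × ℕ | μ.mem p.1 p.2 ∧ p.1 < p.2}, (μ.conj p.2 + μ.part p.2)) +
         (∑ᶠ p ∈ {p : ℕ × ℕ | μ.mem p.1 p.2 ∧ p.2 < p.1}, (μ.part p.1 + μ.conj p.1))) := by
  classical
  obtain ⟨N, hN⟩ := μ.finite
  set B : ℕ := max N (μ.part 1 + 1) with hBdef
  have hB0 : ∀ i, B ≤ i → μ.part i = 0 := fun i h => hN i (le_trans (le_max_left _ _) h)
  have hB1 : μ.part 1 < B := lt_of_lt_of_le (Nat.lt_succ_self _) (le_max_right _ _)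
  have hbox : ∀ i j, μ.mem i j → i < B ∧ j < B := by
    rintro i j ⟨h1, h2, h3⟩
    constructor
    · by_contra hge
      have := hB0 i (by omega); omega
    · have := μ.antitone h1; omega
  set R : Finset ℕ := Finset.range B with hR
  set F : Finset (ℕ × ℕ) := R ×ˢ R with hF
  have hmemF : ∀ p : ℕ × ℕ, μ.mem p.1 p.2 → p ∈ F := by
    intro p hp
    have := hbox p.1 p.2 hp
    simp [hF, hR, Finset.mem_product, Finset.mem_range]
    omega
  -- convert the three set quantities to Finset quantities
  have e1 : {p : ℕ × ℕ | μ.mem p.1 p.2 ∧ p.1 ≠ p.2}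
      = ↑(F.filter fun p => μ.mem p.1 p.2 ∧ p.1 ≠ p.2) := by
    ext p
    simp only [Set.mem_setOf_eq, Finset.coe_filter]
    exact ⟨fun h => ⟨hmemF p h.1, h⟩, fun h => h.2⟩
  have e2 : {p : ℕ × ℕ | μ.mem p.1 p.2 ∧ p.1 < p.2}
      = ↑(F.filter fun p => μ.mem p.1 p.2 ∧ p.1 < p.2) := by
    ext p
    simp only [Set.mem_setOf_eq, Finset.coe_filter]
    exact ⟨fun h => ⟨hmemF p h.1, h⟩, fun h => h.2⟩
  have e3 : {p : ℕ × ℕ | μ.mem p.1 p.2 ∧ p.2 < p.1}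
      = ↑(F.filter fun p => μ.mem p.1 p.2 ∧ p.2 < p.1) := by
    ext p
    simp only [Set.mem_setOf_eq, Finset.coe_filter]
    exact ⟨fun h => ⟨hmemF p h.1, h⟩, fun h => h.2⟩
  rw [e1, e2, e3, Set.ncard_coe_finset, finsum_mem_coe_finset, finsum_mem_coe_finset]
  apply neg_one_pow_eq_of_even_add
  -- turn everything into a single sum over F
  rw [Finset.card_filter, Finset.sum_filter, Finset.sum_filter, ← Finset.sum_add_distrib,
    ← Finset.sum_add_distrib]
  have hpt : ∀ p ∈ F,
      (if μ.mem p.1 p.2 ∧ p.1 ≠ p.2 then 1 else 0)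
        + ((if μ.mem p.1 p.2 ∧ p.1 < p.2 then μ.conj p.2 + μ.part p.2 else 0)
          + (if μ.mem p.1 p.2 ∧ p.2 < p.1 then μ.part p.1 + μ.conj p.1 else 0))
      = (if μ.mem p.1 p.2 ∧ p.1 < p.2 then μ.conj p.2 + μ.part p.2 + 1 else 0)
        + (if μ.mem p.1 p.2 ∧ p.2 < p.1 then μ.part p.1 + μ.conj p.1 + 1 else 0) := by
    intro p _
    by_cases hm : μ.mem p.1 p.2
    · simp only [hm, true_and]
      split_ifs <;> omega
    · simp [hm]
  rw [Finset.sum_congr rfl hpt, Finset.sum_add_distrib]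
  -- group each sum by the relevant coordinate
  have hsumlt : (∑ p ∈ F, if μ.mem p.1 p.2 ∧ p.1 < p.2 then μ.conj p.2 + μ.part p.2 + 1 else 0)
      = ∑ k ∈ R, (R.filter fun i => μ.mem i k ∧ i < k).card * (μ.conj k + μ.part k + 1) := by
    rw [hF, Finset.sum_product_right]
    refine Finset.sum_congr rfl fun k _ => ?_
    exact sum_ite_const (μ.conj k + μ.part k + 1)
  have hsumgt : (∑ p ∈ F, if μ.mem p.1 p.2 ∧ p.2 < p.1 then μ.part p.1 + μ.conj p.1 + 1 else 0)
      = ∑ k ∈ R, (R.filter fun j => μ.mem k j ∧ j < k).card * (μ.part k + μ.conj k + 1) := by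
    rw [hF, Finset.sum_product]
    refine Finset.sum_congr rfl fun k _ => ?_
    exact sum_ite_const (μ.part k + μ.conj k + 1)
  rw [hsumlt, hsumgt, ← Finset.sum_add_distrib]
  -- each group contributes an even amount
  refine Finset.even_sum _ ?_
  intro k hkR
  rw [hR, Finset.mem_range] at hkR
  by_cases hk : 1 ≤ k
  · have hiff := conj_spec μ hB0 hk
    -- compute the two counts
    have hclt : (R.filter fun i => μ.mem i k ∧ i < k) = Finset.Icc 1 (min (μ.conj k) (k - 1)) := by
      ext i
      simp only [Finset.mem_filter, hR, Finset.mem_range, Finset.mem_Icc, Partition'.mem,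
        le_min_iff]
      constructor
      · rintro ⟨hiB, ⟨h1, _, h3⟩, h4⟩
        exact ⟨h1, (hiff i h1).1 h3, by omega⟩
      · rintro ⟨h1, h2, h3⟩
        exact ⟨by omega, ⟨h1, hk, (hiff i h1).2 h2⟩, by omega⟩
    have hcgt : (R.filter fun j => μ.mem k j ∧ j < k) = Finset.Icc 1 (min (μ.part k) (k - 1)) := by
      ext j
      simp only [Finset.mem_filter, hR, Finset.mem_range, Finset.mem_Icc, Partition'.mem,
        le_min_iff]
      constructor
      · rintro ⟨hjB, ⟨_, h2, h3⟩, h4⟩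
        exact ⟨h2, h3, by omega⟩
      · rintro ⟨h1, h2, h3⟩
        exact ⟨by omega, ⟨hk, h1, h2⟩, by omega⟩
    rw [hclt, hcgt, Nat.card_Icc, Nat.card_Icc]
    simp only [Nat.add_sub_cancel]
    set c := μ.conj k with hcdef
    set p := μ.part k with hpdef
    by_cases hp : k ≤ p
    · -- inside the Durfee square horizontally: both counts are k-1
      have hck : k ≤ c := (hiff k hk).1 hp
      have h1 : min c (k - 1) = k - 1 := by omega
      have h2 : min p (k - 1) = k - 1 := by omega
      rw [h1, h2]
      have : (k - 1) * (c + p + 1) + (k - 1) * (p + c + 1)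
          = ((k - 1) * (c + p + 1)) + ((k - 1) * (c + p + 1)) := by ring_nf
      rw [this]
      exact ⟨_, rfl⟩
    · -- outside: counts are c and p, term is (c+p)(c+p+1)
      have hck : c < k := by
        by_contra hge
        push_neg at hge
        have h1c : 1 ≤ c := le_trans hk hge
        have h2 : k ≤ μ.part c := (hiff c h1c).2 le_rfl
        have h3 : μ.part c ≤ μ.part k := μ.antitone hge
        omega
      have h1 : min c (k - 1) = c := by omega
      have h2 : min p (k - 1) = p := by omega
      rw [h1, h2]
      have : c * (c + p + 1) + p * (p + c + 1) = (c + p) * ((c + p) + 1) := by ring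
      rw [this]
      exact Nat.even_mul_succ_self _
  · -- k = 0: both counts vanish
    have hk0 : k = 0 := by omega
    subst hk0
    have hclt : (R.filter fun i => μ.mem i 0 ∧ i < 0) = ∅ := by
      apply Finset.filter_false_of_mem
      intro i _
      rintro ⟨_, h⟩
      omega
    have hcgt : (R.filter fun j => μ.mem 0 j ∧ j < 0) = ∅ := by
      apply Finset.filter_false_of_mem
      intro j _
      rintro ⟨_, h⟩
      omega
    rw [hclt, hcgt]
    simp
end

section
/- Let n ≥ 1 and let q be a nonzero complex number with q not a root of unity (in particular all denominators below are nonzero). For every Young diagram λ, Q_λ(−q^{2n}, q) = Q_λ(q^{2n}, −q), where Q_λ(r,s) = ∏_{(j,j)∈λ} (r s^{λ_j − λ'_j} − r^{−1} s^{−λ_j + λ'_j} + s^{λ_j + λ'_j − 2j + 1} − s^{−λ_j − λ'_j + 2j − 1})/(s^{h(j,j)} − s^{−h(j,j)}) × ∏_{(i,j)∈λ, i≠j} (r s^{d(i,j)} − r^{−1} s^{−d(i,j)})/(s^{h(i,j)} − s^{−h(i,j)}). -/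
/-- Hooklength `h(i,j) = λ_i − i + λ'_j − j + 1` (as an integer). -/
noncomputable def hook (μ : Partition') (i j : ℕ) : ℤ :=
  (μ.part i : ℤ) - i + μ.conj j - j + 1

/-- `d(i,j) = λ_i + λ_j − i − j + 1` if `i ≤ j`, and `d(i,j) = −λ'_i − λ'_j + i + j − 1` if `i > j`. -/
noncomputable def dfun (μ : Partition') (i j : ℕ) : ℤ :=
  if i ≤ j then (μ.part i : ℤ) + μ.part j - i - j + 1
  else -(μ.conj i : ℤ) - μ.conj j + i + j - 1

/-- The Birman–Wenzl–Murakami trace weight `Q_λ(r,s)`. -/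
noncomputable def Q (μ : Partition') (r s : ℂ) : ℂ :=
  (∏ᶠ j ∈ {j : ℕ | μ.mem j j},
      (r * s ^ ((μ.part j : ℤ) - μ.conj j) - r⁻¹ * s ^ (-(μ.part j : ℤ) + μ.conj j)
        + s ^ ((μ.part j : ℤ) + μ.conj j - 2 * j + 1)
        - s ^ (-(μ.part j : ℤ) - μ.conj j + 2 * j - 1))
      / (s ^ hook μ j j - s ^ (-hook μ j j))) *
  ∏ᶠ p ∈ {p : ℕ × ℕ | μ.mem p.1 p.2 ∧ p.1 ≠ p.2},
      (r * s ^ dfun μ p.1 p.2 - r⁻¹ * s ^ (-dfun μ p.1 p.2))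
      / (s ^ hook μ p.1 p.2 - s ^ (-hook μ p.1 p.2))

/-! ### Auxiliary lemmas -/

lemma neg_one_zpow_ite (m : ℤ) : (-1:ℂ)^m = if Even m then 1 else -1 := by
  rcases Int.even_or_odd m with hm|hm
  · simp [hm, hm.neg_one_zpow]
  · simp [hm.neg_one_zpow, Int.not_even_iff_odd.2 hm]

lemma neg_one_pow_ite (m : ℕ) : (-1:ℂ)^m = if Even m then 1 else -1 := by
  rcases Nat.even_or_odd m with hm|hm
  · simp [hm, hm.neg_one_pow]
  · simp [hm.neg_one_pow, Nat.not_even_iff_odd.2 hm]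

lemma neg_base_zpow (q : ℂ) (m : ℤ) : (-q)^m = (-1:ℂ)^m * q^m := by
  rw [← neg_one_mul, mul_zpow]

lemma key_offdiag (q R : ℂ) (d h : ℤ) :
    (R * (-q)^d - R⁻¹ * (-q)^(-d)) / ((-q)^h - (-q)^(-h))
    = (-1:ℂ)^(d+h+1) * (((-R) * q^d - (-R)⁻¹ * q^(-d)) / (q^h - q^(-h))) := by
  rw [neg_base_zpow, neg_base_zpow q (-d), neg_base_zpow q h, neg_base_zpow q (-h),
    neg_one_zpow_ite, neg_one_zpow_ite (-d), neg_one_zpow_ite h, neg_one_zpow_ite (-h),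
    neg_one_zpow_ite (d+h+1)]
  have hden : (-q^h + (q^h)⁻¹ : ℂ) = -(q^h - (q^h)⁻¹) := by ring
  by_cases hd : Even d <;> by_cases hh : Even h <;> simp [hd, hh]
  · rw [if_neg (by simp [Int.even_add_one, Int.even_add, hd, hh])]; ring
  · rw [if_pos (by rw [← Int.not_even_iff_odd]; simp [Int.even_add, hd, hh]), hden, div_neg]; ring
  · intro hc; exfalso; simp [Int.even_add, hd, hh] at hc
  · rw [if_neg (by simp [Int.even_add_one, Int.even_add, hd, hh]), hden, div_neg]

lemma key_diag (q R : ℂ) (a b : ℤ) (hab : Odd (a + b)) :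
    (R * (-q)^a - R⁻¹ * (-q)^(-a) + (-q)^b - (-q)^(-b)) / ((-q)^b - (-q)^(-b))
    = ((-R) * q^a - (-R)⁻¹ * q^(-a) + q^b - q^(-b)) / (q^b - q^(-b)) := by
  have hab' : ¬ Even (a + b) := Int.not_even_iff_odd.2 hab
  have hden : (-q^b + (q^b)⁻¹ : ℂ) = -(q^b - (q^b)⁻¹) := by ring
  rw [neg_base_zpow, neg_base_zpow q (-a), neg_base_zpow q b, neg_base_zpow q (-b),
    neg_one_zpow_ite, neg_one_zpow_ite (-a), neg_one_zpow_ite b, neg_one_zpow_ite (-b)]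
  by_cases ha : Even a <;> by_cases hb : Even b
  · exact absurd (by simp [Int.even_add, ha, hb]) hab'
  · simp [ha, hb]; rw [hden, div_neg]; ring
  · simp [ha, hb]
  · exact absurd (by simp [Int.even_add, ha, hb]) hab'

lemma initial_seg (A : Set ℕ) (hA : A.Finite) (h0 : 0 ∉ A)
    (hdc : ∀ i ∈ A, ∀ j, 1 ≤ j → j ≤ i → j ∈ A) : A = Set.Icc 1 A.ncard := by
  have hIcc : ∀ m : ℕ, (Set.Icc 1 m).ncard = m := by
    intro m; rw [← Finset.coe_Icc, Set.ncard_coe_finset, Nat.card_Icc]; omega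
  by_cases hne : A.Nonempty
  · have hFne : hA.toFinset.Nonempty := by rwa [Set.Finite.toFinset_nonempty]
    set m := hA.toFinset.max' hFne with hm
    have hmA : m ∈ A := by
      have := hA.toFinset.max'_mem hFne
      rwa [Set.Finite.mem_toFinset] at this
    have hAeq : A = Set.Icc 1 m := by
      ext x
      constructor
      · intro hx
        refine ⟨?_, ?_⟩
        · rcases Nat.eq_zero_or_pos x with h | h
          · exact absurd (h ▸ hx) h0
          · exact h
        · exact hA.toFinset.le_max' x (by rwa [Set.Finite.mem_toFinset])
      · rintro ⟨h1, h2⟩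
        exact hdc m hmA x h1 h2
    rw [hAeq, hIcc]
  · rw [Set.not_nonempty_iff_eq_empty] at hne
    simp [hne]

lemma conj_le_iff (μ : Partition') {k i : ℕ} (hk : 1 ≤ k) (hi : 1 ≤ i) :
    i ≤ μ.conj k ↔ k ≤ μ.part i := by
  set A : Set ℕ := {i : ℕ | 1 ≤ i ∧ k ≤ μ.part i} with hAdef
  obtain ⟨N, hN⟩ := μ.finite
  have hA : A.Finite := by
    apply (Set.finite_Iio N).subset
    rintro x ⟨hx1, hx2⟩
    by_contra hx
    simp only [Set.mem_Iio, not_lt] at hx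
    rw [hN x (by simpa using hx)] at hx2
    omega
  have h0 : 0 ∉ A := by rintro ⟨h, -⟩; omega
  have hdc : ∀ a ∈ A, ∀ j, 1 ≤ j → j ≤ a → j ∈ A := by
    rintro a ⟨ha1, ha2⟩ j hj1 hj2
    exact ⟨hj1, le_trans ha2 (μ.antitone hj2)⟩
  have key := initial_seg A hA h0 hdc
  have hconj : μ.conj k = A.ncard := rfl
  constructor
  · intro h
    have : i ∈ A := by rw [key]; exact ⟨hi, by rwa [hconj] at h⟩
    exact this.2
  · intro h
    have : i ∈ A := ⟨hi, h⟩
    rw [key] at this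
    rw [hconj]
    exact this.2

lemma offdiag_finite (μ : Partition') :
    ({p : ℕ × ℕ | μ.mem p.1 p.2 ∧ p.1 ≠ p.2}).Finite := by
  obtain ⟨N, hN⟩ := μ.finite
  apply ((Set.finite_Iio N).prod (Set.finite_Iic (μ.part 1))).subset
  rintro ⟨x, y⟩ ⟨⟨hx, hy, hle⟩, -⟩
  constructor
  · simp only [Set.mem_Iio]
    by_contra hxN
    push_neg at hxN
    rw [hN x hxN] at hle
    omega
  · simp only [Set.mem_Iic]
    exact le_trans hle (μ.antitone hx)

/-- The product of the sign corrections over the off-diagonal boxes is `1`. -/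
lemma sign_prod_one (μ : Partition') :
    ∏ᶠ p ∈ {p : ℕ × ℕ | μ.mem p.1 p.2 ∧ p.1 ≠ p.2},
      (-1:ℂ) ^ (dfun μ p.1 p.2 + hook μ p.1 p.2 + 1) = 1 := by
  classical
  have hS := offdiag_finite μ
  set S := {p : ℕ × ℕ | μ.mem p.1 p.2 ∧ p.1 ≠ p.2} with hSdef
  set g : ℕ → ℂ := fun k => (-1:ℂ) ^ (μ.part k + μ.conj k + 1) with hg
  have step1 : ∀ p ∈ S, (-1:ℂ) ^ (dfun μ p.1 p.2 + hook μ p.1 p.2 + 1)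
      = g (max p.1 p.2) := by
    rintro ⟨x, y⟩ ⟨⟨hx, hy, hle⟩, hne⟩
    simp only [hg]
    rw [neg_one_zpow_ite, neg_one_pow_ite]
    rcases lt_or_gt_of_ne hne with hxy | hxy
    · have hmax : max x y = y := by omega
      rw [hmax]
      have hd : dfun μ x y = (μ.part x : ℤ) + μ.part y - x - y + 1 := by
        simp [dfun, le_of_lt hxy]
      rw [hd]
      have hiff : Even ((μ.part x : ℤ) + μ.part y - x - y + 1 + hook μ x y + 1)
          ↔ Even (μ.part y + μ.conj y + 1) := by
        simp only [hook, Int.even_iff, Nat.even_iff]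
        omega
      rw [if_congr hiff rfl rfl]
    · have hmax : max x y = x := by omega
      rw [hmax]
      have hd : dfun μ x y = -(μ.conj x : ℤ) - μ.conj y + x + y - 1 := by
        simp [dfun]; omega
      rw [hd]
      have hiff : Even (-(μ.conj x : ℤ) - μ.conj y + x + y - 1 + hook μ x y + 1)
          ↔ Even (μ.part x + μ.conj x + 1) := by
        simp only [hook, Int.even_iff, Nat.even_iff]
        omega
      rw [if_congr hiff rfl rfl]
  rw [finprod_mem_congr rfl step1]
  rw [← hS.coe_toFinset, finprod_mem_coe_finset]
  rw [Finset.prod_comp g (fun p : ℕ × ℕ => max p.1 p.2)]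
  apply Finset.prod_eq_one
  intro b hb
  obtain ⟨p, hpT, hpb⟩ := Finset.mem_image.1 hb
  have hpS : p ∈ S := hS.mem_toFinset.1 hpT
  have hb1 : 1 ≤ b := by
    have := hpS.1.1
    omega
  by_cases hEv : Even (μ.part b + μ.conj b + 1)
  · simp [hg, hEv.neg_one_pow]
  · rw [Nat.even_add_one, not_not] at hEv
    -- card of the fiber is even
    set m₁ := min (b-1) (μ.conj b) with hm₁
    set m₂ := min (b-1) (μ.part b) with hm₂
    have hfib : (hS.toFinset.filter fun p : ℕ × ℕ => max p.1 p.2 = b)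
        = ((Finset.Icc 1 m₁).image fun i => (i, b))
          ∪ ((Finset.Icc 1 m₂).image fun j => (b, j)) := by
      ext ⟨x, y⟩
      rw [Finset.mem_filter, hS.mem_toFinset]
      simp only [Finset.mem_filter, hS.mem_toFinset, Finset.mem_union, Finset.mem_image,
        Finset.mem_Icc, hSdef, Set.mem_setOf_eq, Partition'.mem, Prod.mk.injEq]
      constructor
      · rintro ⟨⟨⟨hx, hy, hle⟩, hne⟩, hmax⟩
        rcases lt_or_gt_of_ne hne with hxy | hxy
        · left
          refine ⟨x, ⟨hx, ?_⟩, rfl, by omega⟩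
          have : b ≤ μ.part x := by
            have : y = b := by omega
            omega
          have hxc : x ≤ μ.conj b := (conj_le_iff μ hb1 hx).2 this
          omega
        · right
          refine ⟨y, ⟨hy, ?_⟩, by omega, rfl⟩
          have hxb : x = b := by omega
          rw [hxb] at hle
          omega
      · rintro (⟨i, ⟨hi1, hi2⟩, hix, hby⟩ | ⟨j, ⟨hj1, hj2⟩, hbx, hjy⟩)
        · subst hix; subst hby
          have hib : i ≤ b - 1 := le_trans hi2 (min_le_left _ _)
          have hic : i ≤ μ.conj b := le_trans hi2 (min_le_right _ _)
          have hbp : b ≤ μ.part i := (conj_le_iff μ hb1 hi1).1 hic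
          exact ⟨⟨⟨hi1, hb1, hbp⟩, by omega⟩, by omega⟩
        · subst hbx; subst hjy
          have hjb : j ≤ b - 1 := le_trans hj2 (min_le_left _ _)
          have hjp : j ≤ μ.part b := le_trans hj2 (min_le_right _ _)
          exact ⟨⟨⟨hb1, hj1, hjp⟩, by omega⟩, by omega⟩
    have hinj1 : Function.Injective (fun i : ℕ => (i, b)) := by
      intro a a' h; exact (Prod.ext_iff.1 h).1
    have hinj2 : Function.Injective (fun j : ℕ => ((b, j) : ℕ × ℕ)) := by
      intro a a' h; exact (Prod.ext_iff.1 h).2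
    have hdisj : Disjoint ((Finset.Icc 1 m₁).image fun i => (i, b))
        ((Finset.Icc 1 m₂).image fun j => ((b, j) : ℕ × ℕ)) := by
      rw [Finset.disjoint_left]
      rintro ⟨x, y⟩ h1 h2
      obtain ⟨i, hi, hix⟩ := Finset.mem_image.1 h1
      obtain ⟨j, hj, hjy⟩ := Finset.mem_image.1 h2
      rw [Finset.mem_Icc] at hi hj
      have hx1 : x = i := (Prod.ext_iff.1 hix.symm).1
      have hx2 : x = b := (Prod.ext_iff.1 hjy.symm).1
      have : i ≤ b - 1 := le_trans hi.2 (min_le_left _ _)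
      omega
    have hcard : (hS.toFinset.filter fun p : ℕ × ℕ => max p.1 p.2 = b).card = m₁ + m₂ := by
      rw [hfib, Finset.card_union_of_disjoint hdisj,
        Finset.card_image_of_injective _ hinj1, Finset.card_image_of_injective _ hinj2,
        Nat.card_Icc, Nat.card_Icc]
      omega
    have hceven : Even ((hS.toFinset.filter fun p : ℕ × ℕ => max p.1 p.2 = b).card) := by
      rw [hcard]
      by_cases hbp : b ≤ μ.part b
      · have hbc : b ≤ μ.conj b := (conj_le_iff μ hb1 hb1).2 hbp
        have h1 : m₁ = b - 1 := by omega
        have h2 : m₂ = b - 1 := by omega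
        rw [h1, h2]
        exact ⟨b - 1, rfl⟩
      · have hbc : ¬ (b ≤ μ.conj b) := fun h => hbp ((conj_le_iff μ hb1 hb1).1 h)
        have h1 : m₁ = μ.conj b := by rw [hm₁]; omega
        have h2 : m₂ = μ.part b := by rw [hm₂]; omega
        rw [h1, h2, Nat.even_iff]
        rw [Nat.even_iff] at hEv
        omega
    simp only [hg]
    rw [neg_one_pow_ite, if_neg (by rw [Nat.even_add_one]; exact fun h => h hEv)]
    exact hceven.neg_one_pow

/-- For `n ≥ 1` and `q` a nonzero complex number which is not a root of unity,
`Q_λ(−q^{2n}, q) = Q_λ(q^{2n}, −q)` for every Young diagram `λ`. -/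
theorem Q_symmetry (n : ℕ) (hn : 1 ≤ n) (q : ℂ) (hq : q ≠ 0)
    (hroot : ∀ m : ℕ, 0 < m → q ^ m ≠ 1) (μ : Partition') :
    Q μ (-q ^ (2 * n)) q = Q μ (q ^ (2 * n)) (-q) := by
  symm
  unfold Q
  have hS := offdiag_finite μ
  congr 1
  · -- diagonal part
    apply finprod_mem_congr rfl
    intro j hj
    have e1 : (-(μ.part j:ℤ) + μ.conj j) = -((μ.part j:ℤ) - μ.conj j) := by ring
    have e2 : (-(μ.part j:ℤ) - μ.conj j + 2*j - 1) = -((μ.part j:ℤ) + μ.conj j - 2*j + 1) := by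
      ring
    have e3 : hook μ j j = (μ.part j:ℤ) + μ.conj j - 2*j + 1 := by
      simp only [hook]; ring
    rw [e1, e2, e3]
    exact key_diag q (q^(2*n)) _ _ ⟨(μ.part j:ℤ) - j, by ring⟩
  · -- off-diagonal part
    have step : ∀ p ∈ {p : ℕ × ℕ | μ.mem p.1 p.2 ∧ p.1 ≠ p.2},
        (q^(2*n) * (-q) ^ dfun μ p.1 p.2 - (q^(2*n))⁻¹ * (-q) ^ (-dfun μ p.1 p.2))
          / ((-q) ^ hook μ p.1 p.2 - (-q) ^ (-hook μ p.1 p.2))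
        = (-1:ℂ) ^ (dfun μ p.1 p.2 + hook μ p.1 p.2 + 1) *
          ((-q^(2*n) * q ^ dfun μ p.1 p.2 - (-q^(2*n))⁻¹ * q ^ (-dfun μ p.1 p.2))
          / (q ^ hook μ p.1 p.2 - q ^ (-hook μ p.1 p.2))) := by
      intro p hp
      exact key_offdiag q (q^(2*n)) _ _
    rw [finprod_mem_congr rfl step, finprod_mem_mul_distrib hS, sign_prod_one μ, one_mul]
end

section
/- Define sequences of Laurent polynomials a_m, b_m, c_m ∈ ℤ[r, r^{−1}, s, s^{−1}] for m ≥ 2 by a_2 = 1, b_2 = s − s^{−1}, c_2 = −r^{−1}(s − s^{−1}), and the recursion a_{m+1} = b_m, b_{m+1} = a_m + (s − s^{−1})·b_m, c_{m+1} = r^{−1}·(c_m − (s − s^{−1})·b_m). Then in any associative algebra with elements g, e satisfying g² = 1 + (s − s^{−1})(g − r^{−1}e) and e·g = r^{−1}e, one has g^m = a_m + b_m·g + c_m·e for all m ≥ 2. -/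
variable {K : Type*} [Field K]

/-- Auxiliary: `(a_{m+2}, b_{m+2}, c_{m+2})` for the BWM power recursion. -/
def abcAux (r s : K) : ℕ → K × K × K
  | 0 => (1, s - s⁻¹, -(r⁻¹ * (s - s⁻¹)))
  | n + 1 =>
    let p := abcAux r s n
    (p.2.1, p.1 + (s - s⁻¹) * p.2.1, r⁻¹ * (p.2.2 - (s - s⁻¹) * p.2.1))

/-- `a_m` (defined for `m ≥ 2`): `a_2 = 1`, `a_{m+1} = b_m`. -/
def aCoeff (r s : K) (m : ℕ) : K := (abcAux r s (m - 2)).1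

/-- `b_m` (defined for `m ≥ 2`): `b_2 = s − s^{−1}`, `b_{m+1} = a_m + (s−s^{−1})b_m`. -/
def bCoeff (r s : K) (m : ℕ) : K := (abcAux r s (m - 2)).2.1

/-- `c_m` (defined for `m ≥ 2`): `c_2 = −r^{−1}(s−s^{−1})`,
`c_{m+1} = r^{−1}(c_m − (s−s^{−1})b_m)`. -/
def cCoeff (r s : K) (m : ℕ) : K := (abcAux r s (m - 2)).2.2
/-- Powers of a BWM generator lie in the span of `{1, g, e}`:
`g^m = a_m + b_m·g + c_m·e` for all `m ≥ 2`. -/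
theorem bwm_powers {A : Type*} [Ring A] [Algebra K A]
    (r s : K) (hr : r ≠ 0) (hs : s ≠ 0)
    (g e : A)
    (hquad : g ^ 2 = 1 + (s - s⁻¹) • (g - r⁻¹ • e))
    (heg : e * g = r⁻¹ • e) :
    ∀ m : ℕ, 2 ≤ m →
      g ^ m = aCoeff r s m • (1 : A) + bCoeff r s m • g + cCoeff r s m • e := by
  intro m hm
  induction m, hm using Nat.le_induction with
  | base =>
    rw [hquad]
    simp only [aCoeff, bCoeff, cCoeff, Nat.sub_self, abcAux]
    module
  | succ n hn ih =>
    have h2 : n + 1 - 2 = (n - 2) + 1 := by omega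
    rw [pow_succ, ih]
    simp only [aCoeff, bCoeff, cCoeff, h2, abcAux]
    rw [add_mul, add_mul, smul_mul_assoc, smul_mul_assoc, smul_mul_assoc, one_mul, heg,
        ← pow_two, hquad]
    module
end

section
/- With a_m, b_m, c_m defined by a_2 = 1, b_2 = s − s^{−1}, c_2 = −r^{−1}(s − s^{−1}), and a_{m+1} = b_m, b_{m+1} = a_m + (s−s^{−1})b_m, c_{m+1} = r^{−1}(c_m − (s−s^{−1})b_m), the following parity identities of Laurent polynomials hold for all m ≥ 2: a_m(−r,−s) = (−1)^m a_m(r,s), b_m(−r,−s) = (−1)^{m+1} b_m(r,s), and c_m(−r,−s) = (−1)^m c_m(r,s). -/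
variable {K : Type*} [Field K]

lemma abcAux_parity (r s : K) (n : ℕ) :
    (abcAux (-r) (-s) n).1 = (-1 : K) ^ n * (abcAux r s n).1 ∧
    (abcAux (-r) (-s) n).2.1 = (-1 : K) ^ (n + 1) * (abcAux r s n).2.1 ∧
    (abcAux (-r) (-s) n).2.2 = (-1 : K) ^ n * (abcAux r s n).2.2 := by
  induction n with
  | zero => simp [abcAux, inv_neg]; ring_nf; simp [mul_comm]
  | succ k ih =>
    obtain ⟨ha, hb, hc⟩ := ih
    refine ⟨?_, ?_, ?_⟩ <;> simp only [abcAux, ha, hb, hc, inv_neg] <;> ring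

/-- Parity identities: `a_m(−r,−s) = (−1)^m a_m(r,s)`, `b_m(−r,−s) = (−1)^{m+1} b_m(r,s)`,
`c_m(−r,−s) = (−1)^m c_m(r,s)` for all `m ≥ 2`. -/
theorem abc_parity (r s : K) (hr : r ≠ 0) (hs : s ≠ 0) (m : ℕ) (hm : 2 ≤ m) :
    aCoeff (-r) (-s) m = (-1 : K) ^ m * aCoeff r s m ∧
    bCoeff (-r) (-s) m = (-1 : K) ^ (m + 1) * bCoeff r s m ∧
    cCoeff (-r) (-s) m = (-1 : K) ^ m * cCoeff r s m := by
  obtain ⟨n, rfl⟩ : ∃ n, m = n + 2 := ⟨m - 2, by omega⟩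
  obtain ⟨ha, hb, hc⟩ := abcAux_parity r s n
  have h2 : n + 2 - 2 = n := by omega
  have hpow : (-1 : K) ^ (n + 2) = (-1 : K) ^ n := by ring
  have hpow' : (-1 : K) ^ (n + 2 + 1) = (-1 : K) ^ (n + 1) := by ring
  exact ⟨by simp [aCoeff, h2, hpow, ha], by simp [bCoeff, h2, hpow', hb],
    by simp [cCoeff, h2, hpow, hc]⟩
end
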